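/- Let (X,T) be minimal with T abelian and maximal equicontinuous factor π: X → X_max, where X_max is a compact abelian group. For f in the fiber-preserving subgroup K_e of the structure group H_e = eE(X)e, and for a ∈ X_max with section s: X_max → H_e satisfying ev_0 ∘ π_* ∘ s = id, the support of s(a)·f·s(a)^{-1} equals supp(f) + a. -/

import Mathlib

/-- The Ellis semigroup of the action. -/
def Ellis (T : Type*) (X : Type*) [TopologicalSpace X] [SMul T X] : Set (X → X) :=
  closure (Set.range fun t : T => fun x : X => t • x)

/-- A two-sided ideal of a sub-semigroup `E` of `X → X` under composition. -/
def IsIdealIn {X : Type*} (E I : Set (X → X)) : Prop :=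
  I ⊆ E ∧ I.Nonempty ∧ ∀ f ∈ E, ∀ g ∈ I, f ∘ g ∈ I ∧ g ∘ f ∈ I

/-- A minimal idempotent of `E`: an idempotent belonging to every two-sided ideal. -/
def IsMinIdem {X : Type*} (E : Set (X → X)) (p : X → X) : Prop :=
  p ∈ E ∧ p ∘ p = p ∧ ∀ I : Set (X → X), IsIdealIn E I → p ∈ I

/-- The support of `f`: the set of `ξ` in the factor group on which `f` does not fix
every point of `e · π⁻¹(ξ)`. -/
def FiberSupp {X : Type*} {G : Type*} (π : X → G) (e f : X → X) : Set G :=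
  {ξ : G | ∃ x ∈ e '' (π ⁻¹' {ξ}), f x ≠ x}

/-- Shift lemma: for `f` in the fibre-preserving subgroup `K_e` of the structure group
`H_e = eE(X)e` and a section `s` of `ev₀ ∘ π_*`, the support of `s(a) ∘ f ∘ s(a)⁻¹`
equals `supp(f) + a`. -/
theorem stmt13 {T : Type*} [CommGroup T]
    {X : Type*} [TopologicalSpace X] [CompactSpace X] [T2Space X] [MulAction T X]
    {G : Type*} [AddCommGroup G] [TopologicalSpace G] [IsTopologicalAddGroup G]
    [CompactSpace G] [T2Space G]
    (hcont : ∀ t : T, Continuous fun x : X => t • x)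
    (hmin : ∀ x : X, Dense (MulAction.orbit T x))
    (π : X → G) (hπc : Continuous π) (hπs : Function.Surjective π)
    (ι : T → G) (hπe : ∀ (t : T) (x : X), π (t • x) = ι t + π x)
    (e : X → X) (he : IsMinIdem (Ellis T X) e)
    (f : X → X) (hfH : ∃ h ∈ Ellis T X, f = e ∘ h ∘ e) (hfK : ∀ x : X, π (f x) = π x)
    (s s' : G → X → X)
    (hsH : ∀ a : G, ∃ h ∈ Ellis T X, s a = e ∘ h ∘ e)
    (hs'H : ∀ a : G, ∃ h ∈ Ellis T X, s' a = e ∘ h ∘ e)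
    (hsπ : ∀ (a : G) (x : X), π (s a x) = π x + a)
    (hsinv : ∀ a : G, s a ∘ s' a = e ∧ s' a ∘ s a = e)
    (hsT : ∀ (t : T) (a : G), s (ι t + a) = (fun x : X => t • x) ∘ s a)
    (a : G) :
    FiberSupp π e (s a ∘ f ∘ s' a) = (fun ξ : G => ξ + a) '' FiberSupp π e f := by

  obtain ⟨heE, hee, -⟩ := he
  have hee' : ∀ x, e (e x) = e x := fun x => congrFun hee x
  have key : ∀ g ∈ Ellis T X, ∀ x y : X, π (g x) - π (g y) = π x - π y := by
    intro g hg x y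
    have hcl : IsClosed {g : X → X | π (g x) - π (g y) = π x - π y} :=
      isClosed_eq ((hπc.comp (continuous_apply x)).sub (hπc.comp (continuous_apply y)))
        continuous_const
    have hsub : Set.range (fun t : T => fun x : X => t • x) ⊆
        {g : X → X | π (g x) - π (g y) = π x - π y} := by
      rintro _ ⟨t, rfl⟩
      simp only [Set.mem_setOf_eq, hπe]
      abel
    exact closure_minimal hsub hcl hg
  have πe : ∀ x, π (e x) = π x := by
    intro x
    have h := key e heE (e x) x
    rw [hee', sub_self] at h
    exact (sub_eq_zero.mp h.symm)
  have sand : ∀ p : X → X, (∃ h ∈ Ellis T X, p = e ∘ h ∘ e) →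
      (∀ x, e (p x) = p x) ∧ (∀ x, p (e x) = p x) := by
    rintro p ⟨h, -, rfl⟩
    constructor <;> intro x <;> simp [Function.comp, hee']
  obtain ⟨es', s'e⟩ := sand (s' a) (hs'H a)
  obtain ⟨es, se⟩ := sand (s a) (hsH a)
  obtain ⟨ef, fe⟩ := sand f hfH
  have hinv1 : ∀ x, s a (s' a x) = e x := fun x => congrFun (hsinv a).1 x
  have hinv2 : ∀ x, s' a (s a x) = e x := fun x => congrFun (hsinv a).2 x
  have πs' : ∀ x, π (s' a x) = π x - a := by
    intro x
    have h := hsπ a (s' a x)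
    rw [hinv1, πe] at h
    rw [eq_sub_iff_add_eq, ← h]
  ext ξ
  constructor
  · rintro ⟨x, ⟨y, hy, rfl⟩, hne⟩
    have hπy : π y = ξ := hy
    refine ⟨ξ - a, ⟨s' a (e y), ⟨s' a (e y), ?_, ?_⟩, ?_⟩, sub_add_cancel ξ a⟩
    · show π (s' a (e y)) = ξ - a
      rw [πs', πe, hπy]
    · exact es' (e y)
    · intro hfx
      apply hne
      show s a (f (s' a (e y))) = e y
      rw [hfx, hinv1, hee']
  · rintro ⟨ζ, ⟨x, ⟨y, hy, rfl⟩, hne⟩, rfl⟩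
    have hπy : π y = ζ := hy
    refine ⟨s a (e y), ⟨s a (e y), ?_, ?_⟩, ?_⟩
    · show π (s a (e y)) = ζ + a
      rw [hsπ, πe, hπy]
    · exact es (e y)
    · intro hgx
      apply hne
      have h1 : s a (f (s' a (s a (e y)))) = s a (e y) := hgx
      rw [hinv2, hee'] at h1
      have h2 := congrArg (s' a) h1
      rw [hinv2, hinv2, ef, hee'] at h2
      exact h2
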